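/- For every list a of length L ≥ 1 of positive integers, the height of the canonical decoded forest decode(a) equals the maximum entry of a. In particular, if all entries of a lie in {1,…,M} then decode(a) has height at most M. -/

import Mathlib

/-- A rooted plane tree: a node carrying a finite ordered list of child subtrees.
A node with no children is a leaf. -/
inductive PTree : Type where
  | node : List PTree → PTree

namespace PTree

mutual
/-- Number of leaves of a plane tree. -/
def leaves : PTree → ℕ
  | .node [] => 1
  | .node (c :: cs) => c.leaves + leavesList cs

/-- Total number of leaves of a list of plane trees. -/
def leavesList : List PTree → ℕ
  | [] => 0
  | c :: cs => c.leaves + leavesList cs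
end

mutual
/-- Height of a plane tree (a single leaf has height 1). -/
def height : PTree → ℕ
  | .node [] => 1
  | .node (c :: cs) => 1 + max c.height (heightList cs)

/-- Maximum height among a list of plane trees (0 for the empty list). -/
def heightList : List PTree → ℕ
  | [] => 0
  | c :: cs => max c.height (heightList cs)
end

mutual
/-- Separation levels between consecutive leaves inside a tree whose root is at level `l`:
between two consecutive leaves lying in distinct children we record `l+1`
(one more than the level of their lowest common ancestor, which is the root). -/
def enc : PTree → ℕ → List ℕ
  | .node [], _ => []
  | .node (c :: cs), l => c.enc (l + 1) ++ encList cs (l + 1)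

/-- Separation levels for a list of sibling subtrees all at level `l`, including
the separator `l` between consecutive subtrees. -/
def encList : List PTree → ℕ → List ℕ
  | [], _ => []
  | c :: cs, l => (l :: c.enc l) ++ encList cs l
end

end PTree

/-- Total number of leaves of a plane forest. -/
def forestLeaves (F : List PTree) : ℕ := PTree.leavesList F

/-- Height of a plane forest: the maximum level of any of its nodes (roots are at level 1). -/
def forestHeight (F : List PTree) : ℕ := PTree.heightList F

/-- The separation array of a plane forest: for each pair of consecutive leaves
(numbered left to right), the level at which they separate (`1` if they lie in
different trees, and `1 +` the level of their lowest common ancestor otherwise). -/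
def forestSep : List PTree → List ℕ
  | [] => []
  | t :: ts => t.enc 1 ++ PTree.encList ts 1

/-- Maximum entry of a list of naturals (`0` for the empty list). -/
def listMax (a : List ℕ) : ℕ := a.foldr max 0

/-- Split a list at the positions of entries equal to `v`, producing the list of the
(possibly empty) segments delimited by those entries; a list containing `k` occurrences
of `v` yields `k + 1` segments, in left-to-right order. -/
def splitSep (v : ℕ) : List ℕ → List (List ℕ)
  | [] => [[]]
  | x :: xs =>
    match splitSep v xs with
    | [] => [[]]
    | r :: rs => if x = v then [] :: r :: rs else (x :: r) :: rs

theorem splitSep_ne_nil (v : ℕ) (s : List ℕ) : splitSep v s ≠ [] := by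
  cases s with
  | nil => simp [splitSep]
  | cons x xs =>
    simp only [splitSep]
    cases h : splitSep v xs with
    | nil => simp
    | cons r rs => by_cases hxv : x = v <;> simp [hxv]

theorem listMax_le_of_mem_splitSep {v : ℕ} {s s' : List ℕ} (h : s' ∈ splitSep v s) :
    listMax s' ≤ listMax s := by
  induction s generalizing s' with
  | nil =>
    simp only [splitSep, List.mem_singleton] at h
    subst h; exact le_rfl
  | cons x xs ih =>
    simp only [splitSep] at h
    cases hs : splitSep v xs with
    | nil => exact absurd hs (splitSep_ne_nil v xs)
    | cons r rs =>
      rw [hs] at h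
      have hr : r ∈ splitSep v xs := by rw [hs]; exact List.mem_cons_self
      by_cases hxv : x = v
      · simp only [if_pos hxv, List.mem_cons] at h
        rcases h with h | h | h
        · subst h; simp [listMax]
        · subst h
          exact le_trans (ih hr) (by simp [listMax, le_max_iff, le_refl, or_true])
        · have : s' ∈ splitSep v xs := by rw [hs]; exact List.mem_cons_of_mem _ h
          exact le_trans (ih this) (by simp [listMax, le_max_iff, le_refl, or_true])
      · simp only [if_neg hxv, List.mem_cons] at h
        rcases h with h | h
        · subst h
          have := ih hr
          simp only [listMax, List.foldr] at *
          omega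
        · have : s' ∈ splitSep v xs := by rw [hs]; exact List.mem_cons_of_mem _ h
          have := ih this
          simp only [listMax, List.foldr] at *
          omega

/-- The canonical decoding `T(s, l)` of a list `s` (all of whose entries are intended to
be strictly greater than `l`) into a plane tree rooted at level `l`: the empty list
decodes to a single leaf, and otherwise the children are obtained by decoding, at level
`l + 1`, the segments of `s` delimited by the entries equal to `l + 1`. -/
def decodeT (s : List ℕ) (l : ℕ) : PTree :=
  if h : s = [] ∨ listMax s ≤ l then .node []
  else .node ((splitSep (l + 1) s).attach.map (fun x => decodeT x.1 (l + 1)))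
termination_by listMax s + 1 - l
decreasing_by
  have h1 : listMax x.1 ≤ listMax s := listMax_le_of_mem_splitSep x.2
  push_neg at h
  omega

/-- The canonical decoded forest of a list `a`: decode, as trees rooted at level `1`,
the segments of `a` delimited by the entries equal to `1`. -/
def decode (a : List ℕ) : List PTree := (splitSep 1 a).map (fun s => decodeT s 1)

lemma listMax_nil : listMax [] = 0 := rfl

lemma listMax_cons (x : ℕ) (xs : List ℕ) : listMax (x :: xs) = max x (listMax xs) := rfl

lemma listMax_le_iff {a : List ℕ} {M : ℕ} : listMax a ≤ M ↔ ∀ x ∈ a, x ≤ M := by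
  induction a with
  | nil => simp [listMax_nil]
  | cons x xs ih => simp [listMax_cons, ih]

lemma lt_listMax {s : List ℕ} {l : ℕ} (hne : s ≠ []) (h : ∀ x ∈ s, l < x) :
    l < listMax s := by
  cases s with
  | nil => exact absurd rfl hne
  | cons x xs =>
    have := h x (List.mem_cons_self)
    rw [listMax_cons]
    omega

lemma mem_of_mem_splitSep {v : ℕ} {s t : List ℕ} {x : ℕ}
    (ht : t ∈ splitSep v s) (hx : x ∈ t) : x ∈ s ∧ x ≠ v := by
  induction s generalizing t with
  | nil =>
    simp only [splitSep, List.mem_singleton] at ht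
    subst ht; simp at hx
  | cons y ys ih =>
    simp only [splitSep] at ht
    cases hs : splitSep v ys with
    | nil => exact absurd hs (splitSep_ne_nil v ys)
    | cons r rs =>
      rw [hs] at ht
      by_cases hyv : y = v
      · simp only [if_pos hyv, List.mem_cons] at ht
        rcases ht with h | h | h
        · subst h; simp at hx
        · subst h
          have := ih (t := t) (by rw [hs]; exact List.mem_cons_self) hx
          exact ⟨List.mem_cons_of_mem _ this.1, this.2⟩
        · have := ih (t := t) (by rw [hs]; exact List.mem_cons_of_mem _ h) hx
          exact ⟨List.mem_cons_of_mem _ this.1, this.2⟩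
      · simp only [if_neg hyv, List.mem_cons] at ht
        rcases ht with h | h
        · subst h
          rcases List.mem_cons.mp hx with h' | h'
          · subst h'; exact ⟨List.mem_cons_self, hyv⟩
          · have := ih (t := r) (by rw [hs]; exact List.mem_cons_self) h'
            exact ⟨List.mem_cons_of_mem _ this.1, this.2⟩
        · have := ih (t := t) (by rw [hs]; exact List.mem_cons_of_mem _ h) hx
          exact ⟨List.mem_cons_of_mem _ this.1, this.2⟩

lemma splitSep_max (v : ℕ) (s : List ℕ) :
    max (listMax s) v = max v (listMax ((splitSep v s).map listMax)) := by
  induction s with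
  | nil => simp [splitSep, listMax_nil, listMax_cons]
  | cons x xs ih =>
    simp only [splitSep]
    cases hs : splitSep v xs with
    | nil => exact absurd hs (splitSep_ne_nil v xs)
    | cons r rs =>
      rw [hs] at ih
      by_cases hxv : x = v
      · subst hxv
        simp only [eq_self_iff_true, if_true, List.map_cons, listMax_cons, listMax_nil] at *
        omega
      · simp only [if_neg hxv, List.map_cons, listMax_cons] at *
        omega

lemma heightList_eq (L : List PTree) :
    PTree.heightList L = listMax (L.map PTree.height) := by
  induction L with
  | nil => rfl
  | cons c cs ih => rw [PTree.heightList, List.map_cons, listMax_cons, ih]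

lemma height_node_of_ne_nil {L : List PTree} (h : L ≠ []) :
    (PTree.node L).height = 1 + PTree.heightList L := by
  cases L with
  | nil => exact absurd rfl h
  | cons c cs => rw [PTree.height, PTree.heightList]

lemma listMax_map_max {α : Type} (g : α → ℕ) (v : ℕ) {L : List α} (h : L ≠ []) :
    listMax (L.map fun t => max (g t) v) = max v (listMax (L.map g)) := by
  induction L with
  | nil => exact absurd rfl h
  | cons x xs ih =>
    cases xs with
    | nil => simp [listMax_cons, listMax_nil]; omega
    | cons y ys =>
      have := ih (by simp)
      simp only [List.map_cons, listMax_cons] at *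
      omega

lemma listMax_map_sub {α : Type} (g : α → ℕ) (l : ℕ) (L : List α) :
    listMax (L.map fun t => g t - l) = listMax (L.map g) - l := by
  induction L with
  | nil => simp [listMax_nil]
  | cons x xs ih =>
    simp only [List.map_cons, listMax_cons, ih]
    omega

lemma decodeT_height : ∀ n s l, listMax s + 1 - l ≤ n + 1 → (∀ x ∈ s, l < x) →
    (decodeT s l).height = max (listMax s) l + 1 - l := by
  intro n
  induction n with
  | zero =>
    intro s l hn hx
    have hsl : listMax s ≤ l := by omega
    rw [decodeT, dif_pos (Or.inr hsl), PTree.height]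
    omega
  | succ n ih =>
    intro s l hn hx
    rw [decodeT]
    split
    · next h =>
      have hsl : listMax s ≤ l := by
        rcases h with h | h
        · subst h; simp [listMax_nil]
        · exact h
      rw [PTree.height]
      omega
    · next h =>
      push_neg at h
      obtain ⟨hne, hlt⟩ := h
      have hlt' : l < listMax s := lt_listMax hne hx
      have hmap : ((splitSep (l + 1) s).attach.map fun x => decodeT x.1 (l + 1))
          = (splitSep (l + 1) s).map fun t => decodeT t (l + 1) := by
        simp [List.attach_map_val]
      rw [hmap]
      have hsegne : splitSep (l + 1) s ≠ [] := splitSep_ne_nil _ _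
      have hmapne : ((splitSep (l + 1) s).map fun t => decodeT t (l + 1)) ≠ [] := by
        simpa using hsegne
      rw [height_node_of_ne_nil hmapne, heightList_eq, List.map_map]
      have hcong : ((splitSep (l + 1) s).map (PTree.height ∘ fun t => decodeT t (l + 1)))
          = (splitSep (l + 1) s).map fun t => max (listMax t) (l + 1) - l := by
        apply List.map_congr_left
        intro t ht
        have hent : ∀ x ∈ t, l + 1 < x := by
          intro x hxt
          have := mem_of_mem_splitSep ht hxt
          have := hx x this.1
          have := (mem_of_mem_splitSep ht hxt).2
          omega
        have hle : listMax t ≤ listMax s := listMax_le_of_mem_splitSep ht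
        have := ih t (l + 1) (by omega) hent
        simp only [Function.comp_apply]
        rw [this]
        omega
      rw [hcong, listMax_map_sub (fun t => max (listMax t) (l + 1)) l,
        listMax_map_max listMax (l + 1) hsegne, ← splitSep_max (l + 1) s]
      omega

/-- For every list `a` of length `L ≥ 1` of positive integers, the
height of the canonical decoded forest `decode a` equals the maximum entry of `a`.
In particular, if all entries of `a` lie in `{1,…,M}` then `decode a` has height at
most `M`. -/
theorem decode_height_eq_listMax (a : List ℕ) (hlen : 1 ≤ a.length)
    (hpos : ∀ x ∈ a, 1 ≤ x) :
    forestHeight (decode a) = listMax a ∧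
    ∀ M : ℕ, (∀ x ∈ a, x ≤ M) → forestHeight (decode a) ≤ M := by
  have hseg : splitSep 1 a ≠ [] := splitSep_ne_nil _ _
  have hmain : forestHeight (decode a) = listMax a := by
    unfold forestHeight decode
    rw [heightList_eq, List.map_map]
    have hcong : ((splitSep 1 a).map (PTree.height ∘ fun s => decodeT s 1))
        = (splitSep 1 a).map fun t => max (listMax t) 1 := by
      apply List.map_congr_left
      intro t ht
      have hent : ∀ x ∈ t, 1 < x := by
        intro x hxt
        have h1 := mem_of_mem_splitSep ht hxt
        have := hpos x h1.1
        omega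
      have := decodeT_height (listMax t) t 1 (by omega) hent
      simp only [Function.comp_apply]
      rw [this]
      omega
    rw [hcong, listMax_map_max listMax 1 hseg, ← splitSep_max 1 a]
    have hane : a ≠ [] := by
      cases a with
      | nil => simp at hlen
      | cons x xs => simp
    have := lt_listMax (l := 0) hane (by intro x hx; have := hpos x hx; omega)
    omega
  refine ⟨hmain, fun M hM => ?_⟩
  rw [hmain]
  exact listMax_le_iff.mpr hM
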